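/- Let a,b,α₀,β₀,α₁,β₁,R be positive reals satisfying (α₀ + Rα₁)/(β₀ + Rβ₁) > a/b > α₀/β₀. Define ĉ = (1/R)(α₀ - β₀·a/b). Then ĉ < 0, α₁ + ĉ > 0, b(α₁ + ĉ)/(β₁ a) > 1, and L̂ = -(1/(Rĉ))·log(b(α₁ + ĉ)/(β₁ a)) is a positive real number. -/

import Mathlib

theorem travelling_wave_exists_inverse
    (a b α₀ β₀ α₁ β₁ R : ℝ)
    (ha : 0 < a) (hb : 0 < b) (hα₀ : 0 < α₀) (hβ₀ : 0 < β₀)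
    (hα₁ : 0 < α₁) (hβ₁ : 0 < β₁) (hR : 0 < R)
    (h1 : (α₀ + R * α₁) / (β₀ + R * β₁) > a / b)
    (h2 : a / b > α₀ / β₀) :
    let c := (1 / R) * (α₀ - β₀ * (a / b))
    let L := -(1 / (R * c)) * Real.log (b * (α₁ + c) / (β₁ * a))
    c < 0 ∧ 0 < α₁ + c ∧ 1 < b * (α₁ + c) / (β₁ * a) ∧ 0 < L := by
  intro c L
  have hden : 0 < β₀ + R * β₁ := by positivity
  have h1' : a * (β₀ + R * β₁) < b * (α₀ + R * α₁) := by
    have := (div_lt_div_iff₀ hb hden).mp h1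
    linarith
  have h2' : α₀ * b < β₀ * a := by
    have := (div_lt_div_iff₀ hβ₀ hb).mp h2
    linarith
  have hc : c < 0 := by
    have : α₀ - β₀ * (a / b) < 0 := by
      rw [sub_neg, ← mul_div_assoc, lt_div_iff₀ hb]
      linarith
    have h1R : 0 < 1 / R := by positivity
    simpa [c] using mul_neg_of_pos_of_neg h1R this
  have hratio : 1 < b * (α₁ + c) / (β₁ * a) := by
    rw [lt_div_iff₀ (by positivity)]
    have hcval : c = (1 / R) * (α₀ - β₀ * (a / b)) := rfl
    have hRne : R ≠ 0 := ne_of_gt hR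
    have hbne : b ≠ 0 := ne_of_gt hb
    have : b * (α₁ + c) * R = b * α₁ * R + b * α₀ - β₀ * a := by
      rw [hcval]
      field_simp
      ring
    nlinarith
  have hαc : 0 < α₁ + c := by
    have hpos : 0 < β₁ * a := by positivity
    have := (lt_div_iff₀ hpos).mp hratio
    nlinarith
  have hlog : 0 < Real.log (b * (α₁ + c) / (β₁ * a)) := Real.log_pos hratio
  have hL : 0 < L := by
    have : 0 < -(1 / (R * c)) := by
      have : R * c < 0 := mul_neg_of_pos_of_neg hR hc
      simp only [neg_pos]
      exact div_neg_of_pos_of_neg one_pos this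
    exact mul_pos this hlog
  exact ⟨hc, hαc, hratio, hL⟩
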